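/- Let u be a real number with 0 < u < arccosh(3/2), p a positive integer, ξ := u + 2pπi, and σ₀ := (φ(u) + 2πi)/ξ. Then σ₀ ∈ U₀ := {z ∈ ℂ : 0 < Re z + (u/(2pπ))·Im z < 1/p}, the first complex derivative of F vanishes at σ₀ (F′(σ₀) = 0), and the second derivative satisfies F″(σ₀) = i·ξ·√((2cosh u + 1)(3 − 2cosh u)), where √ is the nonnegative real square root; in particular Re F″(σ₀) = −2pπ·√((2cosh u + 1)(3 − 2cosh u)) < 0. -/

import Mathlib

open Complex MeasureTheory

/-- Inverse hyperbolic cosine. -/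
noncomputable def arccosh (x : ℝ) : ℝ := Real.log (x + Real.sqrt (x ^ 2 - 1))

/-- ξ = u + 2pπi -/
noncomputable def xiC (u : ℝ) (p : ℕ) : ℂ := (u : ℂ) + 2 * p * Real.pi * Complex.I

/-- The dilogarithm. -/
noncomputable def Li2 (z : ℂ) : ℂ := -∫ t in (0:ℝ)..1, Complex.log (1 - t * z) / t

/-- φ(u). -/
noncomputable def phiu (u : ℝ) : ℂ :=
  Complex.log ((Real.cosh u : ℂ) - 1/2 -
    (Complex.I / 2) * (Real.sqrt ((2 * Real.cosh u + 1) * (3 - 2 * Real.cosh u)) : ℂ))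

/-- The potential function F. -/
noncomputable def Ffun (u : ℝ) (p : ℕ) (z : ℂ) : ℂ :=
  (1 / xiC u p) * Li2 (Complex.exp (-(xiC u p) * (1 + z))) -
  (1 / xiC u p) * Li2 (Complex.exp (-(xiC u p) * (1 - z))) +
  (u : ℂ) * z - 2 * Real.pi * Complex.I

section Aux

lemma aux_re {x : ℂ} (hx : ‖x‖ < 1) {t : ℝ} (ht0 : 0 ≤ t) (ht1 : t ≤ 1) :
    0 < (1 - (t:ℂ) * x).re := by
  have h1 : |x.re| ≤ ‖x‖ := Complex.abs_re_le_norm x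
  have := abs_le.1 h1
  simp only [Complex.sub_re, Complex.one_re, Complex.mul_re, Complex.ofReal_re,
    Complex.ofReal_im, zero_mul, sub_zero]
  nlinarith

lemma aux_slit {x : ℂ} (hx : ‖x‖ < 1) {t : ℝ} (ht0 : 0 ≤ t) (ht1 : t ≤ 1) :
    1 - (t:ℂ) * x ∈ Complex.slitPlane :=
  Complex.mem_slitPlane_iff.2 (Or.inl (aux_re hx ht0 ht1))

lemma aux_ne {x : ℂ} (hx : ‖x‖ < 1) {t : ℝ} (ht0 : 0 ≤ t) (ht1 : t ≤ 1) :
    1 - (t:ℂ) * x ≠ 0 := Complex.slitPlane_ne_zero (aux_slit hx ht0 ht1)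

lemma aux1_re {w : ℂ} (hw : ‖w‖ < 1) : 0 < (1 - w).re := by
  have h1 : |w.re| ≤ ‖w‖ := Complex.abs_re_le_norm w
  have := abs_le.1 h1
  simp only [Complex.sub_re, Complex.one_re]
  linarith

lemma aux1_slit {w : ℂ} (hw : ‖w‖ < 1) : 1 - w ∈ Complex.slitPlane :=
  Complex.mem_slitPlane_iff.2 (Or.inl (aux1_re hw))

lemma aux1_ne {w : ℂ} (hw : ‖w‖ < 1) : 1 - w ≠ 0 := Complex.slitPlane_ne_zero (aux1_slit hw)

lemma hasDerivAt_Li2 {z : ℂ} (hz : ‖z‖ < 1) (hz0 : z ≠ 0) :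
    HasDerivAt Li2 (-(Complex.log (1 - z)) / z) z := by
  set ε : ℝ := (1 - ‖z‖) / 2 with hε
  have hε_pos : 0 < ε := by simp only [hε]; linarith
  set r : ℝ := (1 + ‖z‖) / 2 with hr
  have hr1 : r < 1 := by simp only [hr]; linarith
  have hball : ∀ x ∈ Metric.ball z ε, ‖x‖ ≤ r := by
    intro x hx
    have : ‖x - z‖ < ε := by simpa [dist_eq_norm] using hx
    have := norm_le_norm_add_norm_sub' x z
    simp only [hr]; linarith [this]
  have hmeas : ∀ x : ℂ, ‖x‖ < 1 →
      AEStronglyMeasurable (fun t : ℝ => Complex.log (1 - (t:ℂ) * x) / t)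
        (volume.restrict (Set.uIoc (0:ℝ) 1)) := by
    intro x hx
    apply ContinuousOn.aestronglyMeasurable _ measurableSet_uIoc
    rw [Set.uIoc_of_le (by norm_num : (0:ℝ) ≤ 1)]
    apply ContinuousOn.div
    · apply ContinuousOn.clog
      · fun_prop
      · intro t ht
        exact aux_slit hx ht.1.le ht.2
    · fun_prop
    · intro t ht
      exact_mod_cast Complex.ofReal_ne_zero.2 (ne_of_gt ht.1)
  have key := intervalIntegral.hasDerivAt_integral_of_dominated_loc_of_deriv_le
    (μ := volume) (a := 0) (b := 1) (x₀ := z)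
    (F := fun x t => Complex.log (1 - (t:ℂ) * x) / t)
    (F' := fun x t => -(1 / (1 - (t:ℂ) * x)))
    (bound := fun _ => 1 / (1 - r)) (Metric.ball_mem_nhds z hε_pos)
    ?_ ?_ ?_ ?_ ?_ ?_
  · obtain ⟨-, hder⟩ := key
    have hval : (∫ t in (0:ℝ)..1, -(1 / (1 - (t:ℂ) * z))) = Complex.log (1 - z) / z := by
      have hderI : ∀ t ∈ Set.uIcc (0:ℝ) 1,
          HasDerivAt (fun t : ℝ => Complex.log (1 - (t:ℂ) * z) / z) (-(1 / (1 - (t:ℂ) * z))) t := by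
        intro t ht
        rw [Set.uIcc_of_le (by norm_num : (0:ℝ) ≤ 1)] at ht
        have h1 : HasDerivAt (fun w : ℂ => 1 - w * z) (-z) (t:ℂ) := by
          simpa using ((hasDerivAt_id (t:ℂ)).mul_const z).const_sub 1
        have h2 := (h1.clog (aux_slit hz ht.1 ht.2)).comp_ofReal
        have h3 := h2.div_const z
        refine h3.congr_deriv ?_
        field_simp [aux_ne hz ht.1 ht.2]
      have hint : IntervalIntegrable (fun t : ℝ => -(1 / (1 - (t:ℂ) * z))) volume 0 1 := by
        apply ContinuousOn.intervalIntegrable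
        rw [Set.uIcc_of_le (by norm_num : (0:ℝ) ≤ 1)]
        apply ContinuousOn.neg
        apply ContinuousOn.div continuousOn_const
        · fun_prop
        · intro t ht
          exact aux_ne hz ht.1 ht.2
      rw [intervalIntegral.integral_eq_sub_of_hasDerivAt hderI hint]
      simp
    rw [hval] at hder
    have : HasDerivAt (fun x : ℂ => -∫ t in (0:ℝ)..1, Complex.log (1 - (t:ℂ) * x) / t)
        (-(Complex.log (1 - z) / z)) z := hder.neg
    rw [show Li2 = fun x : ℂ => -∫ t in (0:ℝ)..1, Complex.log (1 - (t:ℂ) * x) / t from rfl]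
    simpa [neg_div] using this
  · filter_upwards [Metric.ball_mem_nhds z hε_pos] with x hx
    have : ‖x‖ < 1 := lt_of_le_of_lt (hball x hx) hr1
    exact hmeas x this
  · rw [intervalIntegrable_iff]
    haveI : IsFiniteMeasure (volume.restrict (Set.uIoc (0:ℝ) 1)) := by
      constructor
      rw [Measure.restrict_apply_univ, Set.uIoc_of_le (by norm_num : (0:ℝ) ≤ 1)]
      exact measure_Ioc_lt_top
    apply MeasureTheory.Integrable.mono' (integrable_const (‖z‖ ^ 2 * (1 - ‖z‖)⁻¹ / 2 + ‖z‖))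
      (hmeas z hz)
    rw [ae_restrict_iff' measurableSet_uIoc]
    apply Filter.Eventually.of_forall
    intro t ht
    rw [Set.uIoc_of_le (by norm_num : (0:ℝ) ≤ 1)] at ht
    have ht0 : 0 < t := ht.1
    have ht1 : t ≤ 1 := ht.2
    have hw : ‖-((t:ℂ) * z)‖ = t * ‖z‖ := by
      rw [norm_neg, norm_mul, Complex.norm_real, Real.norm_of_nonneg ht0.le]
    have hwlt : ‖-((t:ℂ) * z)‖ < 1 := by rw [hw]; nlinarith [norm_nonneg z]
    have hlog := Complex.norm_log_one_add_le hwlt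
    rw [show (1 : ℂ) + -((t:ℂ)*z) = 1 - (t:ℂ)*z by ring] at hlog
    rw [norm_div, Complex.norm_real, Real.norm_of_nonneg ht0.le, div_le_iff₀ ht0]
    rw [hw] at hlog
    have h1 : (1 - t*‖z‖)⁻¹ ≤ (1 - ‖z‖)⁻¹ := by
      apply inv_anti₀ (by linarith) (by nlinarith [norm_nonneg z])
    calc ‖Complex.log (1 - (t:ℂ)*z)‖ ≤ (t*‖z‖)^2 * (1 - t*‖z‖)⁻¹ / 2 + t*‖z‖ := hlog
      _ ≤ (‖z‖^2 * (1-‖z‖)⁻¹/2 + ‖z‖) * t := by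
          have h2 : (t*‖z‖)^2 * (1 - t*‖z‖)⁻¹ ≤ t * (‖z‖^2 * (1-‖z‖)⁻¹) := by
            have := norm_nonneg z
            have hi : (0:ℝ) ≤ (1-‖z‖)⁻¹ := by
              apply inv_nonneg.2; linarith
            calc (t*‖z‖)^2 * (1 - t*‖z‖)⁻¹ ≤ (t*‖z‖)^2 * (1-‖z‖)⁻¹ := by
                  apply mul_le_mul_of_nonneg_left h1 (by positivity)
              _ = t^2 * (‖z‖^2*(1-‖z‖)⁻¹) := by ring
              _ ≤ t * (‖z‖^2 * (1-‖z‖)⁻¹) := by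
                  apply mul_le_mul_of_nonneg_right _ (by positivity)
                  nlinarith
          nlinarith [norm_nonneg z]
  · apply ContinuousOn.aestronglyMeasurable _ measurableSet_uIoc
    rw [Set.uIoc_of_le (by norm_num : (0:ℝ) ≤ 1)]
    apply ContinuousOn.neg
    apply ContinuousOn.div continuousOn_const
    · fun_prop
    · intro t ht
      exact aux_ne hz ht.1.le ht.2
  · apply Filter.Eventually.of_forall
    intro t ht x hx
    rw [Set.uIoc_of_le (by norm_num : (0:ℝ) ≤ 1)] at ht
    have hxr : ‖x‖ ≤ r := hball x hx
    have h1 : 1 - r ≤ ‖1 - (t:ℂ)*x‖ := by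
      have h2 := norm_sub_norm_le (1:ℂ) ((t:ℂ)*x)
      have h3 : ‖(t:ℂ)*x‖ ≤ r := by
        rw [norm_mul, Complex.norm_real, Real.norm_of_nonneg ht.1.le]
        nlinarith [norm_nonneg x, hball x hx, ht.2, ht.1.le, hr1]
      simp only [norm_one] at h2
      linarith
    rw [norm_neg, norm_div, norm_one]
    exact one_div_le_one_div_of_le (by linarith) h1
  · exact intervalIntegrable_const
  · apply Filter.Eventually.of_forall
    intro t ht x hx
    rw [Set.uIoc_of_le (by norm_num : (0:ℝ) ≤ 1)] at ht
    have hx1 : ‖x‖ < 1 := lt_of_le_of_lt (hball x hx) hr1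
    have h1 : HasDerivAt (fun x : ℂ => 1 - (t:ℂ) * x) (-(t:ℂ)) x := by
      simpa using (((hasDerivAt_id x).const_mul (t:ℂ)).const_sub 1)
    have h2 := (h1.clog (aux_slit hx1 ht.1.le ht.2)).div_const (t:ℂ)
    refine h2.congr_deriv ?_
    have htne : (t:ℂ) ≠ 0 := Complex.ofReal_ne_zero.2 (ne_of_gt ht.1)
    field_simp [aux_ne hx1 ht.1.le ht.2]

lemma xiC_re (u : ℝ) (p : ℕ) : (xiC u p).re = u := by simp [xiC]

lemma xiC_im (u : ℝ) (p : ℕ) : (xiC u p).im = 2 * p * Real.pi := by simp [xiC]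

lemma xiC_ne (u : ℝ) (p : ℕ) (hu : u ≠ 0) : xiC u p ≠ 0 := by
  intro h
  exact hu (by rw [← xiC_re u p, h, Complex.zero_re])

lemma hasDerivAt_Ffun (u : ℝ) (p : ℕ) (hu : u ≠ 0) {z : ℂ}
    (h1 : ‖Complex.exp (-(xiC u p) * (1 + z))‖ < 1)
    (h2 : ‖Complex.exp (-(xiC u p) * (1 - z))‖ < 1) :
    HasDerivAt (Ffun u p)
      (Complex.log (1 - Complex.exp (-(xiC u p) * (1 + z))) +
       Complex.log (1 - Complex.exp (-(xiC u p) * (1 - z))) + u) z := by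
  have hξ : xiC u p ≠ 0 := xiC_ne u p hu
  have hA : HasDerivAt (fun z : ℂ => -(xiC u p) * (1 + z)) (-(xiC u p)) z := by
    simpa using ((hasDerivAt_id z).const_add 1).const_mul (-(xiC u p))
  have hB := hA.cexp
  have hC := (hasDerivAt_Li2 h1 (Complex.exp_ne_zero _)).comp z hB
  have hD := hC.const_mul (1 / xiC u p)
  have hA2 : HasDerivAt (fun z : ℂ => -(xiC u p) * (1 - z)) (xiC u p) z := by
    simpa using ((hasDerivAt_id z).const_sub 1).const_mul (-(xiC u p))
  have hB2 := hA2.cexp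
  have hC2 := (hasDerivAt_Li2 h2 (Complex.exp_ne_zero _)).comp z hB2
  have hD2 := hC2.const_mul (1 / xiC u p)
  have hE := ((hD.sub hD2).add ((hasDerivAt_id z).const_mul (u:ℂ))).sub_const
    (2 * Real.pi * Complex.I)
  have hfun : HasDerivAt (Ffun u p)
      (1 / xiC u p * (-Complex.log (1 - Complex.exp (-(xiC u p) * (1 + z))) /
          Complex.exp (-(xiC u p) * (1 + z)) * (Complex.exp (-(xiC u p) * (1 + z)) * -(xiC u p))) -
        1 / xiC u p * (-Complex.log (1 - Complex.exp (-(xiC u p) * (1 - z))) /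
          Complex.exp (-(xiC u p) * (1 - z)) * (Complex.exp (-(xiC u p) * (1 - z)) * xiC u p)) +
        (u:ℂ) * 1) z := hE
  convert hfun using 1
  have e1 := Complex.exp_ne_zero (-(xiC u p) * (1 + z))
  have e2 := Complex.exp_ne_zero (-(xiC u p) * (1 - z))
  field_simp
  ring

lemma cosh_arccosh_32 : Real.cosh (arccosh (3/2)) = 3/2 := by
  have hsq : ((3:ℝ)/2) ^ 2 - 1 = 5/4 := by norm_num
  rw [arccosh, hsq]
  set t : ℝ := 3/2 + Real.sqrt (5/4) with ht
  have hs : Real.sqrt (5/4) ^ 2 = 5/4 := Real.sq_sqrt (by norm_num)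
  have hs0 : 0 ≤ Real.sqrt (5/4) := Real.sqrt_nonneg _
  have htpos : 0 < t := by rw [ht]; linarith
  have hmul : t * (3/2 - Real.sqrt (5/4)) = 1 := by rw [ht]; nlinarith
  have hinv : t⁻¹ = 3/2 - Real.sqrt (5/4) := inv_eq_of_mul_eq_one_right hmul
  rw [Real.cosh_eq, Real.exp_neg, Real.exp_log htpos, hinv]
  linarith

end Aux

set_option maxHeartbeats 1000000 in
/-- The saddle point σ₀ lies in U₀, `F′(σ₀) = 0`, and
`F″(σ₀) = iξ√((2cosh u + 1)(3 − 2cosh u))`, whose real part is negative. -/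
theorem Ffun_saddle_point (u : ℝ) (hu0 : 0 < u) (hu1 : u < arccosh (3/2))
    (p : ℕ) (hp : 0 < p) :
    (0 < ((phiu u + 2 * Real.pi * Complex.I) / xiC u p).re +
        (u / (2 * p * Real.pi)) * ((phiu u + 2 * Real.pi * Complex.I) / xiC u p).im ∧
     ((phiu u + 2 * Real.pi * Complex.I) / xiC u p).re +
        (u / (2 * p * Real.pi)) * ((phiu u + 2 * Real.pi * Complex.I) / xiC u p).im
        < 1 / p) ∧
    deriv (Ffun u p) ((phiu u + 2 * Real.pi * Complex.I) / xiC u p) = 0 ∧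
    deriv (deriv (Ffun u p)) ((phiu u + 2 * Real.pi * Complex.I) / xiC u p) =
      Complex.I * xiC u p *
        (Real.sqrt ((2 * Real.cosh u + 1) * (3 - 2 * Real.cosh u)) : ℂ) ∧
    (deriv (deriv (Ffun u p)) ((phiu u + 2 * Real.pi * Complex.I) / xiC u p)).re =
      -2 * p * Real.pi * Real.sqrt ((2 * Real.cosh u + 1) * (3 - 2 * Real.cosh u)) ∧
    (deriv (deriv (Ffun u p)) ((phiu u + 2 * Real.pi * Complex.I) / xiC u p)).re < 0 := by
  have hπ := Real.pi_pos
  have hp1 : (1:ℝ) ≤ (p:ℝ) := by exact_mod_cast hp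
  have hu : u ≠ 0 := ne_of_gt hu0
  -- basic real quantities
  have hc1 : 1 < Real.cosh u := Real.one_lt_cosh.2 hu
  have hc32 : Real.cosh u < 3/2 := by
    rw [← cosh_arccosh_32, Real.cosh_lt_cosh, abs_of_pos hu0, abs_of_pos (lt_trans hu0 hu1)]
    exact hu1
  set c : ℝ := Real.cosh u with hc
  have hineq : 0 < (2*c+1)*(3-2*c) := by nlinarith
  have hs2' : Real.sqrt ((2 * c + 1) * (3 - 2 * c)) ^ 2 = (2*c+1)*(3-2*c) :=
    Real.sq_sqrt hineq.le
  have hs0 : 0 < Real.sqrt ((2 * c + 1) * (3 - 2 * c)) := Real.sqrt_pos.2 hineq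
  set s : ℝ := Real.sqrt ((2 * c + 1) * (3 - 2 * c)) with hs
  have hs2 : s^2 = (2*c+1)*(3-2*c) := hs2'
  -- the unit complex number y with φ(u) = log y
  set y : ℂ := (c:ℂ) - 1/2 - Complex.I/2 * (s:ℂ) with hy
  have hs2C : (s:ℂ)^2 = (2*(c:ℂ)+1)*(3-2*(c:ℂ)) := by exact_mod_cast hs2
  have hyconj : y * ((c:ℂ) - 1/2 + Complex.I/2 * (s:ℂ)) = 1 := by
    rw [hy]
    linear_combination (-(s:ℂ)^2/4) * Complex.I_sq + (1/4 : ℂ) * hs2C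
  have hy0 : y ≠ 0 := left_ne_zero_of_mul_eq_one hyconj
  have hyinv : y⁻¹ = (c:ℂ) - 1/2 + Complex.I/2 * (s:ℂ) := inv_eq_of_mul_eq_one_right hyconj
  have hyre : y.re = c - 1/2 := by simp [hy]
  have hyim : y.im = -(s/2) := by simp [hy]; ring
  have hnormsq : Complex.normSq y = 1 := by
    rw [Complex.normSq_apply, hyre, hyim]; nlinarith [hs2]
  have habs : ‖y‖ = 1 := by rw [Complex.norm_def, hnormsq, Real.sqrt_one]
  have hynorm : ‖y‖ = 1 := habs
  have hphi : phiu u = Complex.log y := by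
    simp only [phiu, ← hc, ← hs, ← hy]
  have hyre_pos : 0 < y.re := by rw [hyre]; linarith
  have harg_neg : Complex.arg y < 0 := Complex.arg_neg_iff.2 (by rw [hyim]; linarith)
  have harg_gt : -(Real.pi/2) < Complex.arg y := by
    have h := abs_lt.1 (Complex.abs_arg_lt_pi_div_two_iff.2 (Or.inl hyre_pos))
    linarith [h.1]
  have hre_phi : (phiu u).re = 0 := by rw [hphi, Complex.log_re, habs, Real.log_one]
  have him_phi : (phiu u).im = Complex.arg y := by rw [hphi, Complex.log_im]
  have hexpphi : Complex.exp (phiu u) = y := by rw [hphi]; exact Complex.exp_log hy0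
  have him1 : -(Real.pi/2) < (phiu u).im := by rw [him_phi]; exact harg_gt
  have him2 : (phiu u).im < 0 := by rw [him_phi]; exact harg_neg
  -- ξ facts
  have hξre : (xiC u p).re = u := xiC_re u p
  have hξim : (xiC u p).im = 2 * p * Real.pi := xiC_im u p
  have hξ0 : xiC u p ≠ 0 := xiC_ne u p hu
  -- σ₀ coordinates
  have hD : Complex.normSq (xiC u p) = u^2 + (2*p*Real.pi)^2 := by
    rw [Complex.normSq_apply, hξre, hξim]; ring
  have hzre : (phiu u + 2 * Real.pi * Complex.I).re = 0 := by simp [hre_phi]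
  have hzim : (phiu u + 2 * Real.pi * Complex.I).im = (phiu u).im + 2 * Real.pi := by simp
  have h1 : ((phiu u + 2 * Real.pi * Complex.I) / xiC u p).re
      = ((phiu u).im + 2*Real.pi) * (2*p*Real.pi) / (u^2 + (2*p*Real.pi)^2) := by
    rw [Complex.div_re, hzre, hzim, hξre, hξim, hD]; ring
  have h2 : ((phiu u + 2 * Real.pi * Complex.I) / xiC u p).im
      = ((phiu u).im + 2*Real.pi) * u / (u^2 + (2*p*Real.pi)^2) := by
    rw [Complex.div_im, hzre, hzim, hξre, hξim, hD]; ring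
  have hppos : (0:ℝ) < 2 * p * Real.pi := by positivity
  have hcomb : ((phiu u + 2 * Real.pi * Complex.I) / xiC u p).re +
      (u/(2*p*Real.pi)) * ((phiu u + 2 * Real.pi * Complex.I) / xiC u p).im
      = ((phiu u).im + 2*Real.pi)/(2*p*Real.pi) := by
    rw [h1, h2]
    have hDpos : (0:ℝ) < u^2 + (2*p*Real.pi)^2 := by positivity
    field_simp
    ring
  -- the exponentials at σ₀
  have hσξ : (phiu u + 2 * Real.pi * Complex.I) / xiC u p * xiC u p
      = phiu u + 2 * Real.pi * Complex.I := div_mul_cancel₀ _ hξ0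
  have hexpξ : Complex.exp (-(xiC u p)) = (Real.exp (-u) : ℂ) := by
    have h : -(xiC u p) = ((-u : ℝ) : ℂ) + (((-(p:ℤ) : ℤ) : ℂ) * (2 * Real.pi * Complex.I)) := by
      rw [xiC]; push_cast; ring
    rw [h, Complex.exp_add, Complex.exp_int_mul_two_pi_mul_I, mul_one, Complex.ofReal_exp]
  have hexp1 : Complex.exp (-(xiC u p) * (1 + (phiu u + 2 * Real.pi * Complex.I) / xiC u p))
      = (Real.exp (-u) : ℂ) * y⁻¹ := by
    have step1 : -(xiC u p) * (1 + (phiu u + 2 * Real.pi * Complex.I) / xiC u p)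
        = -(xiC u p) + -((phiu u + 2 * Real.pi * Complex.I) / xiC u p * xiC u p) := by ring
    rw [step1, hσξ, Complex.exp_add, hexpξ]
    have h : -(phiu u + 2 * Real.pi * Complex.I)
        = -(phiu u) + (((-1 : ℤ) : ℂ) * (2 * Real.pi * Complex.I)) := by push_cast; ring
    rw [h, Complex.exp_add, Complex.exp_int_mul_two_pi_mul_I, mul_one, Complex.exp_neg, hexpphi]
  have hexp2 : Complex.exp (-(xiC u p) * (1 - (phiu u + 2 * Real.pi * Complex.I) / xiC u p))
      = (Real.exp (-u) : ℂ) * y := by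
    have step1 : -(xiC u p) * (1 - (phiu u + 2 * Real.pi * Complex.I) / xiC u p)
        = -(xiC u p) + ((phiu u + 2 * Real.pi * Complex.I) / xiC u p * xiC u p) := by ring
    rw [step1, hσξ, Complex.exp_add, hexpξ]
    have h : phiu u + 2 * Real.pi * Complex.I
        = phiu u + (((1 : ℤ) : ℂ) * (2 * Real.pi * Complex.I)) := by push_cast; ring
    rw [h, Complex.exp_add, Complex.exp_int_mul_two_pi_mul_I, mul_one, hexpphi]
  -- norms and the product identity
  have hAC : (Real.exp u : ℂ) * (Real.exp (-u) : ℂ) = 1 := by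
    rw [← Complex.ofReal_mul, ← Real.exp_add]
    norm_num
  have hcoshC : (c:ℂ) = ((Real.exp u : ℂ) + (Real.exp (-u) : ℂ))/2 := by
    rw [hc]
    push_cast [Real.cosh_eq]
    ring
  have hprod : (1 - (Real.exp (-u) : ℂ) * y⁻¹) * (1 - (Real.exp (-u) : ℂ) * y)
      = (Real.exp (-u) : ℂ) := by
    rw [hyinv, hy]
    linear_combination (-(Real.exp (-u):ℂ)^2*(s:ℂ)^2/4) * Complex.I_sq
      + ((Real.exp (-u):ℂ)^2/4) * hs2C + (-2*(Real.exp (-u):ℂ)) * hcoshC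
      + (-1:ℂ) * hAC
  have hE1 : Real.exp (-u) < 1 := Real.exp_lt_one_iff.2 (by linarith)
  have hEnorm : ‖((Real.exp (-u)):ℂ)‖ = Real.exp (-u) := by
    rw [Complex.norm_real, Real.norm_of_nonneg (Real.exp_pos _).le]
  have hn1 : ‖(Real.exp (-u) : ℂ) * y⁻¹‖ < 1 := by
    rw [norm_mul, norm_inv, hynorm, inv_one, mul_one, hEnorm]; exact hE1
  have hn2 : ‖(Real.exp (-u) : ℂ) * y‖ < 1 := by
    rw [norm_mul, hynorm, mul_one, hEnorm]; exact hE1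
  have hne1 := aux1_ne hn1
  have hne2 := aux1_ne hn2
  -- vanishing of the log sum
  have hlogsum : Complex.log (1 - (Real.exp (-u) : ℂ) * y⁻¹) +
      Complex.log (1 - (Real.exp (-u) : ℂ) * y) + (u:ℂ) = 0 := by
    have he : Complex.exp (Complex.log (1 - (Real.exp (-u) : ℂ) * y⁻¹) +
        Complex.log (1 - (Real.exp (-u) : ℂ) * y) + (u:ℂ)) = 1 := by
      rw [Complex.exp_add, Complex.exp_add, Complex.exp_log hne1, Complex.exp_log hne2,
        hprod, ← Complex.ofReal_exp, ← Complex.ofReal_mul, ← Real.exp_add]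
      norm_num
    obtain ⟨n, hn⟩ := Complex.exp_eq_one_iff.1 he
    have him := congrArg Complex.im hn
    simp only [Complex.add_im, Complex.log_im, Complex.ofReal_im, add_zero] at him
    have ha1 : |Complex.arg (1 - (Real.exp (-u) : ℂ) * y⁻¹)| < Real.pi/2 :=
      Complex.abs_arg_lt_pi_div_two_iff.2 (Or.inl (aux1_re hn1))
    have ha2 : |Complex.arg (1 - (Real.exp (-u) : ℂ) * y)| < Real.pi/2 :=
      Complex.abs_arg_lt_pi_div_two_iff.2 (Or.inl (aux1_re hn2))
    have hnim : ((n : ℂ) * (2 * Real.pi * Complex.I)).im = (n:ℝ) * (2 * Real.pi) := by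
      simp
    rw [hnim] at him
    have hn0 : n = 0 := by
      by_contra h
      have h1 : (1:ℝ) ≤ |(n:ℝ)| := by exact_mod_cast Int.one_le_abs (by omega)
      have h2 : |(n:ℝ) * (2*Real.pi)| < Real.pi := by
        rw [← him]
        have h3 := abs_add_le (Complex.arg (1 - (Real.exp (-u) : ℂ) * y⁻¹))
          (Complex.arg (1 - (Real.exp (-u) : ℂ) * y))
        linarith
      rw [abs_mul, abs_of_pos (by linarith : (0:ℝ) < 2*Real.pi)] at h2
      nlinarith
    rw [hn0] at hn
    simpa using hn
  -- norms of the exponentials at σ₀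
  have hw1norm : ‖Complex.exp (-(xiC u p) * (1 + (phiu u + 2 * Real.pi * Complex.I) / xiC u p))‖
      < 1 := by rw [hexp1]; exact hn1
  have hw2norm : ‖Complex.exp (-(xiC u p) * (1 - (phiu u + 2 * Real.pi * Complex.I) / xiC u p))‖
      < 1 := by rw [hexp2]; exact hn2
  -- first derivative
  have hder1 := hasDerivAt_Ffun u p hu hw1norm hw2norm
  have hderiv0 : deriv (Ffun u p) ((phiu u + 2 * Real.pi * Complex.I) / xiC u p) = 0 := by
    rw [hder1.deriv, hexp1, hexp2]
    exact hlogsum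
  -- the neighborhood where deriv F = G
  set G : ℂ → ℂ := fun z => Complex.log (1 - Complex.exp (-(xiC u p) * (1 + z))) +
      Complex.log (1 - Complex.exp (-(xiC u p) * (1 - z))) + (u:ℂ) with hG
  have hopen : IsOpen {z : ℂ | ‖Complex.exp (-(xiC u p) * (1 + z))‖ < 1 ∧
      ‖Complex.exp (-(xiC u p) * (1 - z))‖ < 1} := by
    have hcont1 : Continuous fun z : ℂ => ‖Complex.exp (-(xiC u p) * (1 + z))‖ := by fun_prop
    have hcont2 : Continuous fun z : ℂ => ‖Complex.exp (-(xiC u p) * (1 - z))‖ := by fun_prop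
    exact (isOpen_lt hcont1 continuous_const).inter (isOpen_lt hcont2 continuous_const)
  have hmemS : ((phiu u + 2 * Real.pi * Complex.I) / xiC u p) ∈
      {z : ℂ | ‖Complex.exp (-(xiC u p) * (1 + z))‖ < 1 ∧
        ‖Complex.exp (-(xiC u p) * (1 - z))‖ < 1} := ⟨hw1norm, hw2norm⟩
  have hev : deriv (Ffun u p) =ᶠ[nhds ((phiu u + 2 * Real.pi * Complex.I) / xiC u p)] G := by
    filter_upwards [hopen.mem_nhds hmemS] with z hz
    rw [(hasDerivAt_Ffun u p hu hz.1 hz.2).deriv, hG]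
  have h2nd : deriv (deriv (Ffun u p)) ((phiu u + 2 * Real.pi * Complex.I) / xiC u p)
      = deriv G ((phiu u + 2 * Real.pi * Complex.I) / xiC u p) := hev.deriv_eq
  -- derivative of G at σ₀
  have hA : HasDerivAt (fun z : ℂ => -(xiC u p) * (1 + z)) (-(xiC u p))
      ((phiu u + 2 * Real.pi * Complex.I) / xiC u p) := by
    simpa using ((hasDerivAt_id _).const_add 1).const_mul (-(xiC u p))
  have hA2 : HasDerivAt (fun z : ℂ => -(xiC u p) * (1 - z)) (xiC u p)
      ((phiu u + 2 * Real.pi * Complex.I) / xiC u p) := by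
    simpa using ((hasDerivAt_id _).const_sub 1).const_mul (-(xiC u p))
  have hg1 := (hA.cexp).const_sub 1
  have hg2 := (hA2.cexp).const_sub 1
  have hl1 := hg1.clog (by rw [hexp1]; exact aux1_slit hn1)
  have hl2 := hg2.clog (by rw [hexp2]; exact aux1_slit hn2)
  have hGder := (hl1.add hl2).add_const (u:ℂ)
  have hGval : deriv G ((phiu u + 2 * Real.pi * Complex.I) / xiC u p)
      = Complex.I * xiC u p * (s:ℂ) := by
    rw [HasDerivAt.deriv (f := G) hGder]
    rw [hexp1, hexp2]
    have hdiffw : (Real.exp (-u) : ℂ) * y⁻¹ - (Real.exp (-u) : ℂ) * y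
        = (Real.exp (-u) : ℂ) * (Complex.I * (s:ℂ)) := by
      rw [hyinv, hy]; ring
    have hE0 : (Real.exp (-u) : ℂ) ≠ 0 := by
      simpa using (Real.exp_pos (-u)).ne'
    rw [div_add_div _ _ hne1 hne2]
    rw [hprod, div_eq_iff hE0]
    linear_combination (xiC u p) * hdiffw
  refine ⟨⟨?_, ?_⟩, hderiv0, ?_, ?_, ?_⟩
  · rw [hcomb]
    apply div_pos (by linarith) hppos
  · rw [hcomb, div_lt_div_iff₀ hppos (by positivity : (0:ℝ) < (p:ℝ))]
    nlinarith
  · rw [h2nd, hGval]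
  · rw [h2nd, hGval]
    simp only [Complex.mul_re, Complex.mul_im, Complex.I_re, Complex.I_im,
      Complex.ofReal_re, Complex.ofReal_im, hξre, hξim]
    ring
  · rw [h2nd, hGval]
    have : (Complex.I * xiC u p * (s:ℂ)).re = -(2*p*Real.pi) * s := by
      simp only [Complex.mul_re, Complex.mul_im, Complex.I_re, Complex.I_im,
        Complex.ofReal_re, Complex.ofReal_im, hξre, hξim]
      ring
    rw [this]
    nlinarith
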